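/- Let μ be a probability measure on a measurable space X, let η : X → [0,1] be measurable, let C* : [0,1] → ℝ be differentiable with C*(η) = C*(1-η), and let f* : [0,1] → ℝ be invertible with inverse satisfying (f*)⁻¹(-v) = 1 - (f*)⁻¹(v). Define φ(v) = C*((f*)⁻¹(v)) + (1 - (f*)⁻¹(v))·(C*)'((f*)⁻¹(v)) and the optimal predictor p*(x) = f*(η(x)). Then the risk R_φ(p*) = ∫ [η(x)·φ(p*(x)) + (1-η(x))·φ(-p*(x))] dμ(x) equals ∫ C*(η(x)) dμ(x), provided the integrands are integrable. -/

import Mathlib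

open Set MeasureTheory

/-- Lemma 1 of the paper: for a proper loss `φ` generated from the minimum conditional risk
`C*` and optimal link `f*` (with inverse `g` satisfying the symmetry
`(f*)⁻¹(-v) = 1 - (f*)⁻¹(v)`), the risk of the optimal predictor `p*(x) = f*(η(x))` equals
`∫ C*(η(x)) dμ(x)`. -/
theorem minimum_risk_formula
    {X : Type*} [MeasurableSpace X]
    (μ : Measure X) [IsProbabilityMeasure μ]
    (η : X → ℝ) (hη_meas : Measurable η) (hη_range : ∀ x, η x ∈ Icc (0:ℝ) 1)
    (Cstar : ℝ → ℝ)
    (hdiff : ∀ t ∈ Icc (0:ℝ) 1, DifferentiableAt ℝ Cstar t)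
    (hsym : ∀ t ∈ Icc (0:ℝ) 1, Cstar t = Cstar (1 - t))
    (fstar g : ℝ → ℝ)
    (hfinj : InjOn fstar (Icc (0:ℝ) 1))
    (hg : ∀ t ∈ Icc (0:ℝ) 1, g (fstar t) = t)
    (hgsym : ∀ t ∈ Icc (0:ℝ) 1, g (-(fstar t)) = 1 - g (fstar t))
    (φ : ℝ → ℝ)
    (hφ : ∀ v, φ v = Cstar (g v) + (1 - g v) * deriv Cstar (g v))
    (pstar : X → ℝ) (hp : ∀ x, pstar x = fstar (η x))
    (hint1 : Integrable (fun x => η x * φ (pstar x) + (1 - η x) * φ (-(pstar x))) μ)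
    (hint2 : Integrable (fun x => Cstar (η x)) μ) :
    ∫ x, (η x * φ (pstar x) + (1 - η x) * φ (-(pstar x))) ∂μ
      = ∫ x, Cstar (η x) ∂μ := by
  have key : ∀ t ∈ Icc (0:ℝ) 1,
      t * φ (fstar t) + (1 - t) * φ (-(fstar t)) = Cstar t := by
    intro t ht
    have ht' : 1 - t ∈ Icc (0:ℝ) 1 := by
      constructor <;> [linarith [ht.2]; linarith [ht.1]]
    have h1 : φ (fstar t) = Cstar t + (1 - t) * deriv Cstar t := by
      rw [hφ, hg t ht]
    have hgneg : g (-(fstar t)) = 1 - t := by rw [hgsym t ht, hg t ht]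
    have h2 : φ (-(fstar t)) = Cstar t + t * deriv Cstar (1 - t) := by
      rw [hφ, hgneg, ← hsym t ht]; ring_nf
    rw [h1, h2]
    rcases eq_or_lt_of_le ht.1 with h0 | h0
    · rw [← h0]; ring
    rcases eq_or_lt_of_le ht.2 with h1' | h1'
    · rw [h1']; ring
    -- interior: deriv Cstar (1 - t) = - deriv Cstar t
    have hmem : t ∈ Ioo (0:ℝ) 1 := ⟨h0, h1'⟩
    have hnhds : Icc (0:ℝ) 1 ∈ nhds t := Icc_mem_nhds h0 h1'
    have heq : Cstar =ᶠ[nhds t] (fun s => Cstar (1 - s)) :=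
      Filter.eventually_of_mem hnhds (fun s hs => hsym s hs)
    have hd2 : HasDerivAt (fun s => Cstar (1 - s)) (-(deriv Cstar (1 - t))) t := by
      have := ((hdiff (1 - t) ht').hasDerivAt).comp t
        (((hasDerivAt_id t).const_sub 1))
      simp [mul_comm] at this
      exact this
    have hd1 : HasDerivAt Cstar (-(deriv Cstar (1 - t))) t :=
      hd2.congr_of_eventuallyEq heq
    have : deriv Cstar t = -(deriv Cstar (1 - t)) := hd1.deriv
    rw [this]; ring
  refine integral_congr_ae (Filter.Eventually.of_forall fun x => ?_)
  simp only [hp x]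
  exact key (η x) (hη_range x)
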